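/- Let β̃ minimize G(β) = ‖y - X_Aβ‖₂² + λ₂‖β‖₂² + λ₁∑_{j∈A} w_j|β_j| over R^{|A|} and let β̃₀ minimize the ridge objective ‖y - X_Aβ‖₂² + λ₂‖β‖₂². If λ_min(X_AᵀX_A) ≥ bn and w_j ≤ W for all j ∈ A, then min_{j∈A}|β̃_j| ≥ min_{j∈A}|β̃₀_j| - λ₁·W·sqrt(|A|)/(bn + λ₂). -/

import Mathlib

open Matrix

lemma quad_lb {k : ℕ} {A : Matrix (Fin k) (Fin k) ℝ} (hA : A.IsHermitian) {c : ℝ}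
    (h : ∀ i, c ≤ hA.eigenvalues i) (v : Fin k → ℝ) :
    c * ∑ j, v j ^ 2 ≤ v ⬝ᵥ A.mulVec v := by
  have hps : (A - c • 1).PosSemidef := by
    have hspec := hA.spectral_theorem
    rw [Unitary.conjStarAlgAut_apply] at hspec
    set U := (hA.eigenvectorUnitary : Matrix (Fin k) (Fin k) ℝ) with hUdef
    have hU : U * star U = 1 := mem_unitaryGroup_iff.mp hA.eigenvectorUnitary.2
    have heq : A - c • 1 = U * (diagonal (fun i => hA.eigenvalues i - c)) * star U := by
      have hdiag : diagonal (fun i => hA.eigenvalues i - c)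
          = diagonal (RCLike.ofReal ∘ hA.eigenvalues) - c • (1 : Matrix (Fin k) (Fin k) ℝ) := by
        ext i j
        by_cases hij : i = j <;>
          simp [Matrix.diagonal_apply, Matrix.one_apply, hij, Matrix.sub_apply]
      rw [hdiag, mul_sub, sub_mul, ← hspec]
      congr 1
      rw [Matrix.mul_smul, Matrix.smul_mul, mul_one, hU]
    rw [heq]
    have := (Matrix.PosSemidef.diagonal (d := fun i => hA.eigenvalues i - c)
      (fun i => sub_nonneg.mpr (h i))).mul_mul_conjTranspose_same U
    simpa [star_eq_conjTranspose] using this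
  have h2 := hps.dotProduct_mulVec_nonneg v
  simp only [star_trivial, sub_mulVec, smul_mulVec, one_mulVec, dotProduct_sub,
    dotProduct_smul, smul_eq_mul, sub_nonneg] at h2
  calc c * ∑ j, v j ^ 2 = c * (v ⬝ᵥ v) := by
        congr 1; rw [dotProduct]; apply Finset.sum_congr rfl; intros; ring
    _ ≤ v ⬝ᵥ A.mulVec v := h2

theorem stmt_18 {n k : ℕ} (hk : 0 < k) (y : Fin n → ℝ)
    (XA : Matrix (Fin n) (Fin k) ℝ) (hH : (XAᵀ * XA).IsHermitian)
    (b : ℝ) (hbn : 0 < b * n) (heigLB : ∀ i, b * n ≤ hH.eigenvalues i)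
    (l2 l1 : ℝ) (hl2 : 0 < l2) (hl1 : 0 ≤ l1)
    (w : Fin k → ℝ) (hw : ∀ j, 0 ≤ w j) (W : ℝ) (hW : ∀ j, w j ≤ W)
    (btil b0 : Fin k → ℝ)
    (hbtil : ∀ β : Fin k → ℝ,
      (∑ i, (y i - XA.mulVec btil i) ^ 2) + l2 * ∑ j, (btil j) ^ 2
          + l1 * ∑ j, w j * |btil j| ≤
        (∑ i, (y i - XA.mulVec β i) ^ 2) + l2 * ∑ j, (β j) ^ 2
          + l1 * ∑ j, w j * |β j|)
    (hb0 : ∀ β : Fin k → ℝ,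
      (∑ i, (y i - XA.mulVec b0 i) ^ 2) + l2 * ∑ j, (b0 j) ^ 2 ≤
        (∑ i, (y i - XA.mulVec β i) ^ 2) + l2 * ∑ j, (β j) ^ 2) :
    (Finset.univ.inf' (Finset.univ_nonempty_iff.2 ⟨⟨0, hk⟩⟩) fun j => |b0 j|)
        - l1 * W * Real.sqrt k / (b * n + l2) ≤
      Finset.univ.inf' (Finset.univ_nonempty_iff.2 ⟨⟨0, hk⟩⟩) fun j => |btil j| := by
  set v : Fin k → ℝ := fun j => btil j - b0 j with hvdef
  set u : Fin n → ℝ := XA.mulVec v with hudef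
  set L : ℝ := -2 * ∑ i, (y i - XA.mulVec b0 i) * u i + 2 * l2 * ∑ j, b0 j * v j with hLdef
  set Q : ℝ := (∑ i, u i ^ 2) + l2 * ∑ j, v j ^ 2 with hQdef
  have hW0 : 0 ≤ W := le_trans (hw ⟨0, hk⟩) (hW ⟨0, hk⟩)
  have hden : 0 < b * n + l2 := by linarith
  -- expansion of the ridge objective along the segment
  have hmv : ∀ (t : ℝ) (i : Fin n),
      XA.mulVec (fun j => b0 j + t * v j) i = XA.mulVec b0 i + t * u i := by
    intro t i
    have : (fun j => b0 j + t * v j) = b0 + t • v := by funext j; simp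
    rw [this, Matrix.mulVec_add, Matrix.mulVec_smul]
    simp [hudef]
  have hexp : ∀ t : ℝ,
      (∑ i, (y i - XA.mulVec (fun j => b0 j + t * v j) i) ^ 2)
          + l2 * ∑ j, (b0 j + t * v j) ^ 2
        = ((∑ i, (y i - XA.mulVec b0 i) ^ 2) + l2 * ∑ j, (b0 j) ^ 2)
          + L * t + Q * (t * t) := by
    intro t
    have h1 : ∑ i, (y i - XA.mulVec (fun j => b0 j + t * v j) i) ^ 2
        = (∑ i, (y i - XA.mulVec b0 i) ^ 2)
            - 2 * t * (∑ i, (y i - XA.mulVec b0 i) * u i) + (t * t) * ∑ i, u i ^ 2 := by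
      rw [Finset.mul_sum, Finset.mul_sum, ← Finset.sum_sub_distrib, ← Finset.sum_add_distrib]
      refine Finset.sum_congr rfl fun i _ => ?_
      rw [hmv t i]; ring
    have h2 : ∑ j, (b0 j + t * v j) ^ 2
        = (∑ j, (b0 j) ^ 2) + 2 * t * (∑ j, b0 j * v j) + (t * t) * ∑ j, v j ^ 2 := by
      rw [Finset.mul_sum, Finset.mul_sum, ← Finset.sum_add_distrib, ← Finset.sum_add_distrib]
      refine Finset.sum_congr rfl fun j _ => ?_
      ring
    rw [h1, h2, hLdef, hQdef]
    ring
  -- the linear term vanishes since b0 is a minimizer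
  have hQ0 : 0 ≤ Q := by
    have : 0 ≤ ∑ i, u i ^ 2 := Finset.sum_nonneg fun i _ => sq_nonneg _
    have : 0 ≤ ∑ j, v j ^ 2 := Finset.sum_nonneg fun j _ => sq_nonneg _
    positivity
  have hL0 : L = 0 := by
    have hquad : ∀ t : ℝ, 0 ≤ Q * (t * t) + L * t + 0 := by
      intro t
      have := hb0 (fun j => b0 j + t * v j)
      rw [hexp t] at this
      linarith
    have := discrim_le_zero hquad
    rw [discrim] at this
    have hL2 : L ^ 2 ≤ 0 := by nlinarith
    nlinarith [sq_nonneg L]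
  -- strong convexity bound on Q via eigenvalues
  have hu_quad : ∑ i, u i ^ 2 = v ⬝ᵥ (XAᵀ * XA).mulVec v := by
    rw [← Matrix.mulVec_mulVec, Matrix.dotProduct_mulVec, Matrix.vecMul_transpose, ← hudef,
      dotProduct]
    exact Finset.sum_congr rfl fun i _ => sq (u i)
  have hQlb : (b * n + l2) * ∑ j, v j ^ 2 ≤ Q := by
    have := quad_lb hH heigLB v
    rw [← hu_quad] at this
    rw [hQdef]; nlinarith [Finset.sum_nonneg (fun j (_ : j ∈ Finset.univ) => sq_nonneg (v j))]
  -- optimality of btil gives an upper bound on Q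
  have hQub : Q ≤ l1 * ∑ j, (w j * |b0 j| - w j * |btil j|) := by
    have h := hbtil b0
    have hfb : (∑ i, (y i - XA.mulVec btil i) ^ 2) + l2 * ∑ j, (btil j) ^ 2
        = ((∑ i, (y i - XA.mulVec b0 i) ^ 2) + l2 * ∑ j, (b0 j) ^ 2) + Q := by
      have := hexp 1
      simp only [one_mul, mul_one] at this
      have harg : (fun j => b0 j + v j) = btil := by funext j; simp [hvdef]
      have hsum : ∑ x, (b0 x + v x) ^ 2 = ∑ x, btil x ^ 2 :=
        Finset.sum_congr rfl fun x _ => by simp [hvdef]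
      rw [harg, hsum] at this
      linarith [this]
    rw [Finset.sum_sub_distrib, mul_sub]
    linarith
  -- ℓ1 bound on difference of penalties
  have habs : ∀ j, |v j| ≤ Real.sqrt (∑ j, v j ^ 2) := by
    intro j
    rw [← Real.sqrt_sq_eq_abs]
    exact Real.sqrt_le_sqrt (Finset.single_le_sum (fun j _ => sq_nonneg (v j)) (Finset.mem_univ j))
  have hsum_abs : ∑ j, |v j| ≤ Real.sqrt k * Real.sqrt (∑ j, v j ^ 2) := by
    have h1 : (∑ j, |v j|) ^ 2 ≤ (k : ℝ) * ∑ j, |v j| ^ 2 := by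
      simpa using sq_sum_le_card_mul_sum_sq (s := (Finset.univ : Finset (Fin k))) (f := fun j => |v j|)
    have h2 : ∑ j, |v j| ^ 2 = ∑ j, v j ^ 2 := by
      exact Finset.sum_congr rfl fun j _ => sq_abs _
    rw [h2] at h1
    have h3 : 0 ≤ ∑ j, |v j| := Finset.sum_nonneg fun j _ => abs_nonneg _
    calc ∑ j, |v j| = Real.sqrt ((∑ j, |v j|) ^ 2) := (Real.sqrt_sq h3).symm
      _ ≤ Real.sqrt ((k : ℝ) * ∑ j, v j ^ 2) := Real.sqrt_le_sqrt h1
      _ = Real.sqrt k * Real.sqrt (∑ j, v j ^ 2) := Real.sqrt_mul (Nat.cast_nonneg k) _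
  have hpen : ∑ j, (w j * |b0 j| - w j * |btil j|) ≤ W * ∑ j, |v j| := by
    rw [Finset.mul_sum]
    refine Finset.sum_le_sum fun j _ => ?_
    have h1 : |b0 j| - |btil j| ≤ |v j| := by
      have := abs_sub_abs_le_abs_sub (b0 j) (btil j)
      have hc : |b0 j - btil j| = |v j| := by rw [hvdef]; simp [abs_sub_comm]
      linarith
    rcases le_or_gt 0 (|b0 j| - |btil j|) with hpos | hneg
    · calc w j * |b0 j| - w j * |btil j| = w j * (|b0 j| - |btil j|) := by ring
        _ ≤ W * (|b0 j| - |btil j|) := mul_le_mul_of_nonneg_right (hW j) hpos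
        _ ≤ W * |v j| := mul_le_mul_of_nonneg_left h1 hW0
    · calc w j * |b0 j| - w j * |btil j| = w j * (|b0 j| - |btil j|) := by ring
        _ ≤ 0 := mul_nonpos_of_nonneg_of_nonpos (hw j) (le_of_lt hneg)
        _ ≤ W * |v j| := mul_nonneg hW0 (abs_nonneg _)
  -- deduce the bound on ‖v‖
  set s : ℝ := Real.sqrt (∑ j, v j ^ 2) with hsdef
  have hs0 : 0 ≤ s := Real.sqrt_nonneg _
  have hssq : s * s = ∑ j, v j ^ 2 :=
    Real.mul_self_sqrt (Finset.sum_nonneg fun j _ => sq_nonneg _)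
  have hkey : (b * n + l2) * (s * s) ≤ l1 * W * Real.sqrt k * s := by
    rw [hssq]
    calc (b * n + l2) * ∑ j, v j ^ 2 ≤ Q := hQlb
      _ ≤ l1 * ∑ j, (w j * |b0 j| - w j * |btil j|) := hQub
      _ ≤ l1 * (W * ∑ j, |v j|) := by
          refine mul_le_mul_of_nonneg_left ?_ hl1
          exact le_trans hpen (le_refl _)
      _ ≤ l1 * (W * (Real.sqrt k * s)) := by
          refine mul_le_mul_of_nonneg_left (mul_le_mul_of_nonneg_left hsum_abs hW0) hl1
      _ = l1 * W * Real.sqrt k * s := by ring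
  have hsle : s ≤ l1 * W * Real.sqrt k / (b * n + l2) := by
    rcases eq_or_lt_of_le hs0 with hs | hs
    · rw [← hs]
      positivity
    · rw [le_div_iff₀ hden]
      nlinarith
  -- conclude
  apply Finset.le_inf'
  intro j _
  have h1 : (Finset.univ.inf' (Finset.univ_nonempty_iff.2 ⟨⟨0, hk⟩⟩) fun j => |b0 j|) ≤ |b0 j| :=
    Finset.inf'_le _ (Finset.mem_univ j)
  have h2 : |b0 j| - |btil j| ≤ |v j| := by
    have := abs_sub_abs_le_abs_sub (b0 j) (btil j)
    have hc : |b0 j - btil j| = |v j| := by rw [hvdef]; simp [abs_sub_comm]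
    linarith
  have h3 := habs j
  linarith
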